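/- Let M = P_X(M₁, M₂) be a modular join over X, i.e., M is a simple matroid on E = E₁ ∪ E₂ where E₁ and E₂ are proper modular flats with E₁ ∩ E₂ = X and Mᵢ = M|Eᵢ. Then χ(M, t) · χ(M|X, t) = χ(M₁, t) · χ(M₂, t), where χ denotes the characteristic polynomial. -/

import Mathlib

open scoped Classical Matroid

namespace Paper

variable {α : Type*}

/-- The rank of a set in a matroid: the maximum size of an independent subset. -/
noncomputable def mrk (M : Matroid α) (X : Set α) : ℕ :=
  sSup {n | ∃ I, M.Indep I ∧ I ⊆ X ∧ I.ncard = n}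

/-- A circuit of a matroid: a minimal dependent subset of the ground set. -/
def Circuit (M : Matroid α) (C : Set α) : Prop :=
  C ⊆ M.E ∧ ¬ M.Indep C ∧ ∀ D ⊂ C, M.Indep D

/-- A matroid is simple if every subset of the ground set with at most two
elements is independent. -/
def SimpleM (M : Matroid α) : Prop :=
  ∀ X ⊆ M.E, X.ncard ≤ 2 → M.Indep X

/-- A modular flat: a flat `X` with `r X + r Y = r (X ⊓ Y) + r (X ⊔ Y)` for every flat `Y`
(meet of flats is intersection; join is the closure of the union). -/
def ModularFlat (M : Matroid α) (X : Set α) : Prop :=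
  M.IsFlat X ∧ ∀ Y, M.IsFlat Y →
    mrk M X + mrk M Y = mrk M (X ∩ Y) + mrk M (M.closure (X ∪ Y))

/-- A matroid is round if its ground set is not the union of two proper flats. -/
def Round (M : Matroid α) : Prop :=
  ¬ ∃ F₁ F₂ : Set α, M.IsFlat F₁ ∧ M.IsFlat F₂ ∧ F₁ ≠ M.E ∧ F₂ ≠ M.E ∧ M.E = F₁ ∪ F₂

/-- Möbius function (measured from the bottom flat) on the lattice of flats of a matroid. -/
noncomputable def mob (M : Matroid α) [Fintype α] : Finset α → ℤ
  | F =>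
    if (F : Set α) = M.closure ∅ then 1
    else - ∑ G ∈ (Finset.univ.powerset.filter
        (fun G : Finset α => M.IsFlat ↑G ∧ (G : Set α) ⊂ (F : Set α))).attach,
        mob M G.1
termination_by F => F.card
decreasing_by
  · have hG := G.2
    simp only [Finset.mem_filter] at hG
    exact Finset.card_lt_card (Finset.coe_ssubset.mp hG.2.2)

/-- The characteristic polynomial `χ(M, t) = ∑_{F flat} μ(F) t^(r(M) - r(F))`. -/
noncomputable def charPoly (M : Matroid α) [Fintype α] : Polynomial ℤ :=
  ∑ F ∈ Finset.univ.powerset.filter (fun F : Finset α => M.IsFlat ↑F),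
    Polynomial.C (mob M F) * Polynomial.X ^ (mrk M M.E - mrk M ↑F)

section RankAux

open Set

variable [Fintype α] {M : Matroid α} {I J X Y F F₀ : Set α}

lemma closure_flat' (M : Matroid α) (X : Set α) : M.IsFlat (M.closure X) := by
  refine ⟨fun I Y hIF hIY => ?_, M.closure_subset_ground X⟩
  have h1 : Y ⊆ M.closure I := hIY.subset_closure
  rwa [hIF.closure_eq_closure, M.closure_closure] at h1

lemma flat_inter (hX : M.IsFlat X) (hY : M.IsFlat Y) : M.IsFlat (X ∩ Y) := by
  have h : M.closure (X ∩ Y) = X ∩ Y := by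
    apply subset_antisymm
    · exact subset_inter
        ((M.closure_subset_closure inter_subset_left).trans hX.closure.subset)
        ((M.closure_subset_closure inter_subset_right).trans hY.closure.subset)
    · exact M.subset_closure _ (inter_subset_left.trans hX.subset_ground)
  rw [← h]; exact closure_flat' M _

lemma flat_iff_closure_self : M.IsFlat F ↔ M.closure F = F ∧ F ⊆ M.E := by
  constructor
  · exact fun h => ⟨h.closure, h.subset_ground⟩
  · rintro ⟨h1, _⟩; rw [← h1]; exact closure_flat' M F

lemma mrk_basis' (hI : M.IsBasis' I X) : mrk M X = I.ncard := by
  have hub : ∀ n ∈ {n | ∃ J, M.Indep J ∧ J ⊆ X ∧ J.ncard = n}, n ≤ I.ncard := by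
    rintro n ⟨J, hJ, hJX, rfl⟩
    obtain ⟨J', hJ', hJJ'⟩ := hJ.subset_isBasis'_of_subset hJX
    have h1 : J.ncard ≤ J'.ncard := Set.ncard_le_ncard hJJ' (Set.toFinite _)
    have h2 : J'.ncard = I.ncard := by
      rw [Set.ncard_def, hJ'.encard_eq_encard hI, ← Set.ncard_def]
    omega
  refine le_antisymm (csSup_le ⟨0, ∅, M.empty_indep, empty_subset X, by simp⟩ hub) ?_
  exact le_csSup ⟨I.ncard, hub⟩ ⟨I, hI.indep, hI.subset, rfl⟩

lemma mrk_basis (hI : M.IsBasis I X) : mrk M X = I.ncard :=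
  mrk_basis' hI.isBasis'

lemma indep_ncard_le_mrk (hI : M.Indep I) (hIX : I ⊆ X) : I.ncard ≤ mrk M X := by
  obtain ⟨J, hJ⟩ := M.exists_isBasis' X
  rw [mrk_basis' hJ]
  obtain ⟨J', hJ', hJJ'⟩ := hI.subset_isBasis'_of_subset hIX
  have h1 : I.ncard ≤ J'.ncard := Set.ncard_le_ncard hJJ' (Set.toFinite _)
  have h2 : J'.ncard = J.ncard := by
    rw [Set.ncard_def, hJ'.encard_eq_encard hJ, ← Set.ncard_def]
  omega

lemma mrk_mono (h : X ⊆ Y) : mrk M X ≤ mrk M Y := by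
  obtain ⟨I, hI⟩ := M.exists_isBasis' X
  rw [mrk_basis' hI]
  exact indep_ncard_le_mrk hI.indep (hI.subset.trans h)

lemma mrk_closure_eq (M : Matroid α) (X : Set α) : mrk M (M.closure X) = mrk M X := by
  obtain ⟨I, hI⟩ := M.exists_isBasis' X
  rw [mrk_basis' hI, mrk_basis hI.isBasis_closure_right]

lemma mrk_empty (M : Matroid α) : mrk M (∅ : Set α) = 0 := by
  rw [mrk_basis M.empty_indep.isBasis_self, Set.ncard_empty]

lemma mrk_indep (hI : M.Indep I) : mrk M I = I.ncard := mrk_basis hI.isBasis_self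

lemma mrk_submod (hX : X ⊆ M.E) (hY : Y ⊆ M.E) :
    mrk M (X ∪ Y) + mrk M (X ∩ Y) ≤ mrk M X + mrk M Y := by
  obtain ⟨I, hI⟩ := M.exists_isBasis (X ∩ Y) (inter_subset_left.trans hX)
  obtain ⟨J, hJ, hIJ⟩ := hI.indep.subset_isBasis_of_subset
    (hI.subset.trans (inter_subset_left.trans subset_union_left)) (union_subset hX hY)
  rw [mrk_basis hJ, mrk_basis hI]
  have a1 : (J ∩ X).ncard ≤ mrk M X := indep_ncard_le_mrk (hJ.indep.inter_right X) inter_subset_right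
  have a2 : (J ∩ Y).ncard ≤ mrk M Y := indep_ncard_le_mrk (hJ.indep.inter_right Y) inter_subset_right
  have key : (J ∩ X).ncard + (J ∩ Y).ncard
      = ((J ∩ X) ∪ (J ∩ Y)).ncard + ((J ∩ X) ∩ (J ∩ Y)).ncard :=
    (Set.ncard_union_add_ncard_inter _ _ (Set.toFinite _) (Set.toFinite _)).symm
  have hJu : (J ∩ X) ∪ (J ∩ Y) = J := by
    rw [← Set.inter_union_distrib_left]
    exact Set.inter_eq_self_of_subset_left hJ.subset
  have hJi : I ⊆ (J ∩ X) ∩ (J ∩ Y) :=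
    subset_inter (subset_inter hIJ (hI.subset.trans inter_subset_left))
      (subset_inter hIJ (hI.subset.trans inter_subset_right))
  have hle : I.ncard ≤ ((J ∩ X) ∩ (J ∩ Y)).ncard := Set.ncard_le_ncard hJi (Set.toFinite _)
  rw [hJu] at key
  omega


lemma mrk_restrict {R S : Set α} (hSR : S ⊆ R) : mrk (M ↾ R) S = mrk M S := by
  unfold mrk
  congr 1
  ext n
  constructor
  · rintro ⟨I, hI, hIS, rfl⟩; exact ⟨I, (Matroid.restrict_indep_iff.mp hI).1, hIS, rfl⟩
  · rintro ⟨I, hI, hIS, rfl⟩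
    exact ⟨I, Matroid.restrict_indep_iff.mpr ⟨hI, hIS.trans hSR⟩, hIS, rfl⟩

lemma closure_restrict_flat (hF₀ : M.IsFlat F₀) {S : Set α} (hS : S ⊆ F₀) :
    (M ↾ F₀).closure S = M.closure S := by
  obtain ⟨I, hI⟩ := M.exists_isBasis S (hS.trans hF₀.subset_ground)
  have hIr : (M ↾ F₀).IsBasis I S := hI.isBasis_restrict_of_subset hS
  have hIF₀ : I ⊆ F₀ := hI.subset.trans hS
  have hIcl : M.closure I ⊆ F₀ := by
    rw [← hF₀.closure]; exact M.closure_subset_closure hIF₀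
  rw [← hI.closure_eq_closure, ← hIr.closure_eq_closure,
    hI.indep.closure_eq_setOfPred_isBasis_insert, hIr.indep.closure_eq_setOfPred_isBasis_insert]
  ext e
  simp only [mem_setOf_eq]
  constructor
  · intro h
    obtain ⟨h1, h2⟩ := Matroid.isBasis_restrict_iff'.mp h
    rwa [inter_eq_self_of_subset_left (h2.trans hF₀.subset_ground)] at h1
  · intro h
    have heF₀ : e ∈ F₀ := hIcl (hI.indep.insert_isBasis_iff_mem_closure.mp h)
    exact h.isBasis_restrict_of_subset (insert_subset heF₀ hIF₀)

lemma flat_restrict_iff (hF₀ : M.IsFlat F₀) {S : Set α} :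
    (M ↾ F₀).IsFlat S ↔ M.IsFlat S ∧ S ⊆ F₀ := by
  constructor
  · intro h
    have hSF₀ : S ⊆ F₀ := h.subset_ground
    have := h.closure
    rw [closure_restrict_flat hF₀ hSF₀] at this
    exact ⟨flat_iff_closure_self.mpr ⟨this, hSF₀.trans hF₀.subset_ground⟩, hSF₀⟩
  · rintro ⟨h1, h2⟩
    refine flat_iff_closure_self.mpr ⟨?_, by rwa [Matroid.restrict_ground_eq]⟩
    rw [closure_restrict_flat hF₀ h2, h1.closure]

/-- The finset of (finset) flats of a matroid. -/
noncomputable def flats (M : Matroid α) [Fintype α] : Finset (Finset α) :=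
  Finset.univ.powerset.filter (fun F : Finset α => M.IsFlat ↑F)

lemma mem_flats {G : Finset α} : G ∈ flats M ↔ M.IsFlat ↑G := by
  simp [flats]

end RankAux

section MobAux

open Set

variable [Fintype α] {M : Matroid α} {F₀ x : Set α}

set_option linter.unusedSectionVars false

lemma mob_eq (M : Matroid α) (F : Finset α) :
    mob M F = if (F : Set α) = M.closure ∅ then 1
      else - ∑ G ∈ (Finset.univ.powerset.filter
          (fun G : Finset α => M.IsFlat ↑G ∧ (G : Set α) ⊂ (F : Set α))), mob M G := by
  rw [mob]
  split_ifs with h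
  · rfl
  · rw [← Finset.sum_attach (Finset.univ.powerset.filter
      (fun G : Finset α => M.IsFlat ↑G ∧ (G : Set α) ⊂ (F : Set α))) (fun G => mob M G)]

lemma filter_ssubset_eq (S : Set α) :
    (flats M).filter (fun G : Finset α => (G : Set α) ⊂ S)
      = Finset.univ.powerset.filter
          (fun G : Finset α => M.IsFlat ↑G ∧ (G : Set α) ⊂ S) := by
  rw [flats, Finset.filter_filter]

lemma filter_subset_split {S : Set α} (hS : M.IsFlat S) :
    (flats M).filter (fun G : Finset α => (G : Set α) ⊆ S)
      = insert S.toFinset ((flats M).filter (fun G : Finset α => (G : Set α) ⊂ S)) := by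
  ext G
  simp only [Finset.mem_filter, Finset.mem_insert, mem_flats]
  constructor
  · rintro ⟨h1, h2⟩
    rcases h2.ssubset_or_eq with h | h
    · exact Or.inr ⟨h1, h⟩
    · exact Or.inl (by rw [← Finset.coe_inj, h, coe_toFinset])
  · rintro (h | ⟨h1, h2⟩)
    · subst h
      rw [coe_toFinset]
      exact ⟨hS, Subset.rfl⟩
    · exact ⟨h1, h2.subset⟩

lemma toFinset_not_mem_ssubset (S : Set α) :
    S.toFinset ∉ (flats M).filter (fun G : Finset α => (G : Set α) ⊂ S) := by
  simp only [Finset.mem_filter, coe_toFinset]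
  rintro ⟨-, h⟩
  exact h.ne rfl

lemma mobsum (hl : M.closure ∅ = ∅) {S : Set α} (hS : M.IsFlat S) :
    ∑ G ∈ (flats M).filter (fun G : Finset α => (G : Set α) ⊆ S), mob M G
      = if S = ∅ then 1 else 0 := by
  rw [filter_subset_split hS, Finset.sum_insert (toFinset_not_mem_ssubset S)]
  have hm := mob_eq M S.toFinset
  rw [coe_toFinset, hl] at hm
  by_cases h : S = ∅
  · subst h
    rw [if_pos rfl] at hm
    rw [if_pos rfl]
    have he : (flats M).filter (fun G : Finset α => (G : Set α) ⊂ (∅ : Set α)) = ∅ :=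
      Finset.filter_false_of_mem
        (fun G _ h => (h.ne (Set.subset_empty_iff.mp h.subset)).elim)
    rw [he, Finset.sum_empty, hm]
    norm_num
  · rw [if_neg h] at hm
    rw [if_neg h, hm, filter_ssubset_eq]
    ring

lemma eq_mob_of_sum (hl : M.closure ∅ = ∅) (f : Finset α → ℤ)
    (hf : ∀ F ∈ flats M,
      ∑ G ∈ (flats M).filter (fun G : Finset α => (G : Set α) ⊆ (F : Set α)), f G
        = if (F : Set α) = ∅ then 1 else 0) :
    ∀ F ∈ flats M, f F = mob M F := by
  intro F
  induction F using Finset.strongInduction with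
  | _ F IH =>
    intro hF
    have hFflat : M.IsFlat ↑F := mem_flats.mp hF
    have h1 := hf F hF
    have h2 := mobsum hl hFflat
    rw [filter_subset_split hFflat, Finset.sum_insert (toFinset_not_mem_ssubset _),
      Finset.toFinset_coe] at h1 h2
    have h3 : ∑ G ∈ (flats M).filter (fun G : Finset α => (G : Set α) ⊂ (F : Set α)), f G
        = ∑ G ∈ (flats M).filter (fun G : Finset α => (G : Set α) ⊂ (F : Set α)), mob M G := by
      apply Finset.sum_congr rfl
      intro G hG
      simp only [Finset.mem_filter] at hG
      exact IH G (Finset.coe_ssubset.mp hG.2) hG.1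
    omega

end MobAux


section Stanley

open Set

variable [Fintype α] {M : Matroid α} {x : Set α}

set_option linter.unusedSectionVars false

lemma rank_add (hx : ModularFlat M x) {A B : Set α} (hA : M.IsFlat A) (hAx : A ⊆ x)
    (hB : M.IsFlat B) (hBx : B ∩ x = ∅) :
    mrk M (M.closure (A ∪ B)) = mrk M A + mrk M B := by
  have hAE : A ⊆ M.E := hA.subset_ground
  have hBE : B ⊆ M.E := hB.subset_ground
  have hJf : M.IsFlat (M.closure (A ∪ B)) := closure_flat' M _
  have e1 := hx.2 B hB
  have hxB : x ∩ B = ∅ := by rwa [inter_comm] at hBx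
  rw [hxB, mrk_empty] at e1
  have e2 := hx.2 _ hJf
  have hclJ : M.closure (x ∪ M.closure (A ∪ B)) = M.closure (x ∪ B) := by
    rw [Matroid.closure_union_closure_right_eq, ← union_assoc, union_eq_left.mpr hAx]
  rw [hclJ] at e2
  have hsub : mrk M (M.closure (A ∪ B)) + mrk M (A ∩ B) ≤ mrk M A + mrk M B := by
    have h1 := mrk_submod hAE hBE
    rw [mrk_closure_eq]
    omega
  have hA_le : mrk M A ≤ mrk M (x ∩ M.closure (A ∪ B)) :=
    mrk_mono (subset_inter hAx
      (subset_union_left.trans (M.subset_closure _ (union_subset hAE hBE))))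
  omega

lemma rank_bounds (hx : ModularFlat M x) {B : Set α}
    (hB : M.IsFlat B) (hBx : B ∩ x = ∅) :
    mrk M x + mrk M B ≤ mrk M M.E := by
  have e1 := hx.2 B hB
  have hxB : x ∩ B = ∅ := by rwa [inter_comm] at hBx
  rw [hxB, mrk_empty] at e1
  have h2 : mrk M (M.closure (x ∪ B)) ≤ mrk M M.E := mrk_mono (M.closure_subset_ground _)
  omega

lemma stanley (M : Matroid α) (hl : M.closure ∅ = ∅) {x : Set α}
    (hx : ModularFlat M x) :
    charPoly M =
      (∑ A ∈ (flats M).filter (fun A : Finset α => (A : Set α) ⊆ x),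
        Polynomial.C (mob M A) * Polynomial.X ^ (mrk M x - mrk M ↑A)) *
      (∑ B ∈ (flats M).filter (fun B : Finset α => (B : Set α) ∩ x = ∅),
        Polynomial.C (mob M B) * Polynomial.X ^ (mrk M M.E - mrk M x - mrk M ↑B)) := by
  classical
  set sAp := (flats M).filter (fun A : Finset α => (A : Set α) ⊆ x) with hsA
  set sBp := (flats M).filter (fun B : Finset α => (B : Set α) ∩ x = ∅) with hsB
  set prs := sAp ×ˢ sBp with hprs
  set key : Finset α × Finset α → Finset α :=
    (fun p => (M.closure ((p.1 : Set α) ∪ (p.2 : Set α))).toFinset) with hkeydef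
  have hkeycoe : ∀ p : Finset α × Finset α,
      (key p : Set α) = M.closure ((p.1 : Set α) ∪ (p.2 : Set α)) := by
    intro p
    rw [hkeydef]
    exact coe_toFinset _
  have hmem : ∀ p ∈ prs, (M.IsFlat (p.1 : Set α) ∧ (p.1 : Set α) ⊆ x)
      ∧ (M.IsFlat (p.2 : Set α) ∧ (p.2 : Set α) ∩ x = ∅) := by
    intro p hp
    rw [hprs, Finset.mem_product, hsA, hsB, Finset.mem_filter, Finset.mem_filter,
      mem_flats, mem_flats] at hp
    tauto
  have hkeymem : ∀ p : Finset α × Finset α, key p ∈ flats M := by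
    intro p
    rw [mem_flats, hkeycoe]
    exact closure_flat' M _
  -- main combinatorial identity : mob factors through pairs
  have hT : ∀ F ∈ flats M,
      (∑ p ∈ prs.filter (fun p => key p = F), mob M p.1 * mob M p.2) = mob M F := by
    apply eq_mob_of_sum hl
    intro F hF
    have hFflat : M.IsFlat (F : Set α) := mem_flats.mp hF
    set s' := prs.filter
      (fun p => ((p.1 : Set α) ⊆ (F : Set α)) ∧ ((p.2 : Set α) ⊆ (F : Set α))) with hs'
    have hstep : ∀ G ∈ (flats M).filter (fun G : Finset α => (G : Set α) ⊆ (F : Set α)),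
        prs.filter (fun p => key p = G) = s'.filter (fun p => key p = G) := by
      intro G hG
      simp only [Finset.mem_filter] at hG
      rw [hs', Finset.filter_filter]
      apply Finset.filter_congr
      intro p hp
      obtain ⟨⟨hp1f, hp1x⟩, hp2f, hp2x⟩ := hmem p hp
      constructor
      · intro hkG
        have hcl : M.closure ((p.1 : Set α) ∪ (p.2 : Set α)) = (G : Set α) := by
          rw [← hkeycoe p, hkG]
        have hsubcl : (p.1 : Set α) ∪ (p.2 : Set α)
            ⊆ M.closure ((p.1 : Set α) ∪ (p.2 : Set α)) :=
          M.subset_closure _ (union_subset hp1f.subset_ground hp2f.subset_ground)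
        rw [hcl] at hsubcl
        exact ⟨⟨(subset_union_left.trans hsubcl).trans hG.2,
          (subset_union_right.trans hsubcl).trans hG.2⟩, hkG⟩
      · rintro ⟨-, hkG⟩
        exact hkG
    have e1 : ∑ G ∈ (flats M).filter (fun G : Finset α => (G : Set α) ⊆ (F : Set α)),
        (∑ p ∈ prs.filter (fun p => key p = G), mob M p.1 * mob M p.2)
        = ∑ p ∈ s', mob M p.1 * mob M p.2 := by
      rw [Finset.sum_congr rfl (fun G hG => by rw [hstep G hG])]
      apply Finset.sum_fiberwise_of_maps_to
      intro p hp
      rw [hs', Finset.mem_filter] at hp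
      rw [Finset.mem_filter]
      refine ⟨hkeymem p, ?_⟩
      rw [hkeycoe p, ← hFflat.closure]
      exact M.closure_subset_closure (union_subset hp.2.1 hp.2.2)
    have e2 : s' = (sAp.filter (fun A : Finset α => (A : Set α) ⊆ (F : Set α))) ×ˢ
        (sBp.filter (fun B : Finset α => (B : Set α) ⊆ (F : Set α))) := by
      ext p
      simp only [hs', hprs, Finset.mem_filter, Finset.mem_product]
      tauto
    rw [e1, e2, Finset.sum_product, ← Finset.sum_mul_sum]
    have hA1 : sAp.filter (fun A : Finset α => (A : Set α) ⊆ (F : Set α))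
        = (flats M).filter (fun G : Finset α => (G : Set α) ⊆ x ∩ (F : Set α)) := by
      rw [hsA, Finset.filter_filter]
      exact Finset.filter_congr (fun G _ => subset_inter_iff.symm)
    have hfac1 : (∑ A ∈ sAp.filter (fun A : Finset α => (A : Set α) ⊆ (F : Set α)), mob M A)
        = if x ∩ (F : Set α) = ∅ then 1 else 0 := by
      rw [hA1]
      exact mobsum hl (flat_inter hx.1 hFflat)
    by_cases hxF : x ∩ (F : Set α) = ∅
    · have hB1 : sBp.filter (fun B : Finset α => (B : Set α) ⊆ (F : Set α))
          = (flats M).filter (fun G : Finset α => (G : Set α) ⊆ (F : Set α)) := by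
        rw [hsB, Finset.filter_filter]
        apply Finset.filter_congr
        intro G _
        constructor
        · rintro ⟨-, h2⟩
          exact h2
        · intro h
          refine ⟨?_, h⟩
          have hsub : (G : Set α) ∩ x ⊆ x ∩ (F : Set α) := fun e he => ⟨he.2, h he.1⟩
          rw [hxF] at hsub
          exact subset_empty_iff.mp hsub
      rw [hfac1, if_pos hxF, hB1, mobsum hl hFflat, one_mul]
    · rw [hfac1, if_neg hxF, zero_mul,
        if_neg (fun h => hxF (by rw [h, inter_empty]))]
  -- now expand the characteristic polynomial over pairs
  have hrk : ∀ p ∈ prs, mrk M ((key p : Finset α) : Set α)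
      = mrk M (p.1 : Set α) + mrk M (p.2 : Set α) := by
    intro p hp
    obtain ⟨⟨hp1f, hp1x⟩, hp2f, hp2x⟩ := hmem p hp
    rw [hkeycoe p]
    exact rank_add hx hp1f hp1x hp2f hp2x
  have hmain : charPoly M = ∑ p ∈ prs,
      Polynomial.C (mob M p.1 * mob M p.2)
        * Polynomial.X ^ (mrk M M.E - mrk M ((key p : Finset α) : Set α)) := by
    rw [charPoly,
      ← Finset.sum_fiberwise_of_maps_to (fun p (_ : p ∈ prs) => hkeymem p)
        (fun p => Polynomial.C (mob M p.1 * mob M p.2)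
          * Polynomial.X ^ (mrk M M.E - mrk M ((key p : Finset α) : Set α)))]
    apply Finset.sum_congr rfl
    intro F hF
    have : ∀ p ∈ prs.filter (fun p => key p = F),
        Polynomial.C (mob M p.1 * mob M p.2)
          * Polynomial.X ^ (mrk M M.E - mrk M ((key p : Finset α) : Set α))
        = Polynomial.C (mob M p.1 * mob M p.2)
          * Polynomial.X ^ (mrk M M.E - mrk M (F : Set α)) := by
      intro p hp
      rw [Finset.mem_filter] at hp
      rw [hp.2]
    rw [Finset.sum_congr rfl this, ← Finset.sum_mul, ← map_sum, hT F hF]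
  rw [hmain, Finset.sum_mul_sum, hprs, Finset.sum_product]
  apply Finset.sum_congr rfl
  intro A hA
  apply Finset.sum_congr rfl
  intro B hB
  have hpmem : (A, B) ∈ prs := by
    rw [hprs, Finset.mem_product]
    exact ⟨hA, hB⟩
  obtain ⟨⟨hAf, hAx⟩, hBf, hBx⟩ := hmem (A, B) hpmem
  have h1 : mrk M ((key (A, B) : Finset α) : Set α)
      = mrk M (A : Set α) + mrk M (B : Set α) := hrk (A, B) hpmem
  have h2 : mrk M (A : Set α) ≤ mrk M x := mrk_mono hAx
  have h3 : mrk M x + mrk M (B : Set α) ≤ mrk M M.E := rank_bounds hx hBf hBx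
  have hexp : (mrk M x - mrk M (A : Set α)) + (mrk M M.E - mrk M x - mrk M (B : Set α))
      = mrk M M.E - mrk M ((key (A, B) : Finset α) : Set α) := by
    rw [h1]
    omega
  rw [← hexp, pow_add, Polynomial.C_mul]
  ring

end Stanley


section Final

open Set

variable [Fintype α] {M : Matroid α} {F₀ : Set α}

set_option linter.unusedSectionVars false

lemma simple_loopless (hs : SimpleM M) : M.closure ∅ = ∅ := by
  by_contra h
  obtain ⟨e, he⟩ := nonempty_iff_ne_empty.mpr h
  have heE : e ∈ M.E := M.closure_subset_ground ∅ he
  have hind : M.Indep {e} :=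
    hs {e} (singleton_subset_iff.mpr heE) (by rw [Set.ncard_singleton]; omega)
  have := M.empty_indep.mem_closure_iff.mp he
  rcases this with hdep | hmem
  · rw [insert_empty_eq] at hdep
    exact hdep.not_indep hind
  · exact hmem

lemma mob_restrict (hl : M.closure ∅ = ∅) (hF₀ : M.IsFlat F₀) :
    ∀ F : Finset α, (F : Set α) ⊆ F₀ → mob (M ↾ F₀) F = mob M F := by
  intro F
  induction F using Finset.strongInduction with
  | _ F IH =>
    intro hFsub
    have hcl0 : (M ↾ F₀).closure ∅ = ∅ := by
      rw [closure_restrict_flat hF₀ (empty_subset _), hl]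
    rw [mob_eq, mob_eq, hcl0, hl]
    split_ifs with h
    · rfl
    · congr 1
      have hfilter : (Finset.univ.powerset.filter
            (fun G : Finset α => (M ↾ F₀).IsFlat ↑G ∧ (G : Set α) ⊂ (F : Set α)))
          = (Finset.univ.powerset.filter
            (fun G : Finset α => M.IsFlat ↑G ∧ (G : Set α) ⊂ (F : Set α))) := by
        ext G
        simp only [Finset.mem_filter, flat_restrict_iff hF₀]
        constructor
        · rintro ⟨h1, ⟨h2, -⟩, h4⟩
          exact ⟨h1, h2, h4⟩
        · rintro ⟨h1, h2, h4⟩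
          exact ⟨h1, ⟨h2, h4.subset.trans hFsub⟩, h4⟩
      rw [hfilter]
      apply Finset.sum_congr rfl
      intro G hG
      simp only [Finset.mem_filter] at hG
      exact IH G (Finset.coe_ssubset.mp hG.2.2) (hG.2.2.subset.trans hFsub)

lemma charPoly_restrict (hl : M.closure ∅ = ∅) (hF₀ : M.IsFlat F₀) :
    charPoly (M ↾ F₀) =
      ∑ A ∈ (flats M).filter (fun A : Finset α => (A : Set α) ⊆ F₀),
        Polynomial.C (mob M A) * Polynomial.X ^ (mrk M F₀ - mrk M ↑A) := by
  rw [charPoly]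
  have hset : (Finset.univ.powerset.filter fun F : Finset α => (M ↾ F₀).IsFlat ↑F)
      = (flats M).filter (fun A : Finset α => (A : Set α) ⊆ F₀) := by
    ext G
    simp only [flats, Finset.mem_filter, flat_restrict_iff hF₀, and_assoc]
  rw [hset]
  apply Finset.sum_congr rfl
  intro A hA
  simp only [Finset.mem_filter] at hA
  rw [mob_restrict hl hF₀ A hA.2, Matroid.restrict_ground_eq,
    mrk_restrict (Set.Subset.refl F₀), mrk_restrict hA.2]

lemma modularX {E₁ E₂ : Set α} (h₁ : ModularFlat M E₁) (h₂ : ModularFlat M E₂) :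
    ModularFlat (M ↾ E₂) (E₁ ∩ E₂) := by
  constructor
  · rw [flat_restrict_iff h₂.1]
    exact ⟨flat_inter h₁.1 h₂.1, inter_subset_right⟩
  · intro Y hY
    rw [flat_restrict_iff h₂.1] at hY
    obtain ⟨hYf, hYE₂⟩ := hY
    set X := E₁ ∩ E₂ with hXdef
    have hXE₂ : X ⊆ E₂ := inter_subset_right
    have hXE : X ⊆ M.E := hXE₂.trans h₂.1.subset_ground
    have hYE : Y ⊆ M.E := hYf.subset_ground
    have hXYE₂ : X ∪ Y ⊆ E₂ := union_subset hXE₂ hYE₂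
    have hclE₂ : M.closure (X ∪ Y) ⊆ E₂ := by
      rw [← h₂.1.closure]
      exact M.closure_subset_closure hXYE₂
    have hclr : (M ↾ E₂).closure (X ∪ Y) = M.closure (X ∪ Y) :=
      closure_restrict_flat h₂.1 hXYE₂
    rw [hclr, mrk_restrict hXE₂, mrk_restrict hYE₂,
      mrk_restrict ((inter_subset_right : X ∩ Y ⊆ Y).trans hYE₂),
      mrk_restrict hclE₂]
    have hJf : M.IsFlat (M.closure (X ∪ Y)) := closure_flat' M _
    have e1 := h₁.2 Y hYf
    have e2 := h₁.2 _ hJf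
    have f1 : E₁ ∩ Y = X ∩ Y := by
      rw [hXdef, inter_assoc]
      congr 1
      exact (inter_eq_self_of_subset_right hYE₂).symm
    have f2 : M.closure (E₁ ∪ M.closure (X ∪ Y)) = M.closure (E₁ ∪ Y) := by
      rw [Matroid.closure_union_closure_right_eq, ← union_assoc,
        union_eq_left.mpr (inter_subset_left : X ⊆ E₁)]
    rw [f1] at e1
    rw [f2] at e2
    have f3 : mrk M X ≤ mrk M (E₁ ∩ M.closure (X ∪ Y)) :=
      mrk_mono (subset_inter inter_subset_left
        (subset_union_left.trans (M.subset_closure _ (union_subset hXE hYE))))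
    have f4 : mrk M (M.closure (X ∪ Y)) + mrk M (X ∩ Y) ≤ mrk M X + mrk M Y := by
      have := mrk_submod hXE hYE
      rw [mrk_closure_eq]
      omega
    omega

lemma mrk_pair {E₁ E₂ : Set α} (h₁ : ModularFlat M E₁) (h₂ : ModularFlat M E₂)
    (hunion : M.E = E₁ ∪ E₂) :
    mrk M E₁ + mrk M E₂ = mrk M (E₁ ∩ E₂) + mrk M M.E := by
  have := h₁.2 E₂ h₂.1
  rwa [← hunion, Matroid.closure_ground] at this

end Final

/-- Brylawski: for a modular join `M = P_X(M₁, M₂)`,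
`χ(M, t) · χ(M|X, t) = χ(M₁, t) · χ(M₂, t)`. -/
theorem stmt11 [Fintype α] (M : Matroid α) (hsimple : SimpleM M)
    {E₁ E₂ : Set α} (h₁ : ModularFlat M E₁) (h₂ : ModularFlat M E₂)
    (hp₁ : E₁ ≠ M.E) (hp₂ : E₂ ≠ M.E) (hunion : M.E = E₁ ∪ E₂) :
    charPoly M * charPoly (M ↾ (E₁ ∩ E₂)) =
      charPoly (M ↾ E₁) * charPoly (M ↾ E₂) := by
  classical
  have hl : M.closure ∅ = ∅ := simple_loopless hsimple
  have hXflat : M.IsFlat (E₁ ∩ E₂) := flat_inter h₁.1 h₂.1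
  have hl₂ : (M ↾ E₂).closure ∅ = ∅ := by
    rw [closure_restrict_flat h₂.1 (Set.empty_subset _), hl]
  have hXflat₂ : (M ↾ E₂).IsFlat (E₁ ∩ E₂) := by
    rw [flat_restrict_iff h₂.1]
    exact ⟨hXflat, Set.inter_subset_right⟩
  have hs1 := stanley M hl h₁
  rw [← charPoly_restrict hl h₁.1] at hs1
  have hs2 := stanley (M ↾ E₂) hl₂ (modularX h₁ h₂)
  rw [← charPoly_restrict hl₂ hXflat₂,
    Matroid.restrict_restrict_eq M (Set.inter_subset_right : E₁ ∩ E₂ ⊆ E₂)] at hs2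
  have hidx : (flats (M ↾ E₂)).filter
        (fun B : Finset α => (B : Set α) ∩ (E₁ ∩ E₂) = ∅)
      = (flats M).filter
        (fun B : Finset α => (B : Set α) ∩ E₁ = ∅ ∧ (B : Set α) ⊆ E₂) := by
    ext B
    simp only [Finset.mem_filter, mem_flats, flat_restrict_iff h₂.1]
    constructor
    · rintro ⟨⟨hBfl, hBE₂⟩, hBd⟩
      refine ⟨hBfl, ?_, hBE₂⟩
      have hsub : (B : Set α) ∩ E₁ ⊆ (B : Set α) ∩ (E₁ ∩ E₂) :=
        fun e he => ⟨he.1, he.2, hBE₂ he.1⟩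
      rw [hBd] at hsub
      exact Set.subset_empty_iff.mp hsub
    · rintro ⟨hBfl, hBd, hBE₂⟩
      refine ⟨⟨hBfl, hBE₂⟩, ?_⟩
      have hsub : (B : Set α) ∩ (E₁ ∩ E₂) ⊆ (B : Set α) ∩ E₁ :=
        fun e he => ⟨he.1, he.2.1⟩
      rw [hBd] at hsub
      exact Set.subset_empty_iff.mp hsub
  have hD : (∑ B ∈ (flats (M ↾ E₂)).filter
        (fun B : Finset α => (B : Set α) ∩ (E₁ ∩ E₂) = ∅),
        Polynomial.C (mob (M ↾ E₂) B) * Polynomial.X ^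
          (mrk (M ↾ E₂) (M ↾ E₂).E - mrk (M ↾ E₂) (E₁ ∩ E₂) - mrk (M ↾ E₂) ↑B))
      = (∑ B ∈ (flats M).filter (fun B : Finset α => (B : Set α) ∩ E₁ = ∅),
        Polynomial.C (mob M B) * Polynomial.X ^
          (mrk M M.E - mrk M E₁ - mrk M ↑B)) := by
    rw [hidx]
    have hidx2 : (flats M).filter
          (fun B : Finset α => (B : Set α) ∩ E₁ = ∅ ∧ (B : Set α) ⊆ E₂)
        = (flats M).filter (fun B : Finset α => (B : Set α) ∩ E₁ = ∅) := by
      apply Finset.filter_congr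
      intro B hB
      have hBfl : M.IsFlat (B : Set α) := mem_flats.mp hB
      constructor
      · rintro ⟨h1, -⟩
        exact h1
      · intro h1
        refine ⟨h1, fun e he => ?_⟩
        have heE : e ∈ E₁ ∪ E₂ := by
          rw [← hunion]
          exact hBfl.subset_ground he
        rcases heE with he1 | he2
        · exact absurd (Set.mem_inter he he1) (by rw [h1]; exact Set.notMem_empty e)
        · exact he2
    rw [hidx2]
    apply Finset.sum_congr rfl
    intro B hB
    simp only [Finset.mem_filter, mem_flats] at hB
    have hBE₂ : (B : Set α) ⊆ E₂ := by
      intro e he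
      have heE : e ∈ E₁ ∪ E₂ := by
        rw [← hunion]
        exact hB.1.subset_ground he
      rcases heE with he1 | he2
      · exact absurd (Set.mem_inter he he1) (by rw [hB.2]; exact Set.notMem_empty e)
      · exact he2
    rw [mob_restrict hl h₂.1 B hBE₂, Matroid.restrict_ground_eq,
      mrk_restrict hBE₂, mrk_restrict (Set.inter_subset_right : E₁ ∩ E₂ ⊆ E₂),
      mrk_restrict (Set.Subset.refl E₂)]
    have hp := mrk_pair h₁ h₂ hunion
    have m1 : mrk M (E₁ ∩ E₂) ≤ mrk M E₂ := mrk_mono Set.inter_subset_right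
    have m2 : mrk M E₁ ≤ mrk M M.E := mrk_mono h₁.1.subset_ground
    have hexp : mrk M E₂ - mrk M (E₁ ∩ E₂) - mrk M ↑B
        = mrk M M.E - mrk M E₁ - mrk M ↑B := by
      omega
    rw [hexp]
  rw [hD] at hs2
  rw [hs1, hs2]
  ring

end Paper
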